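/- arXiv:1312.6412 — 2 statements merged into one kernel-verified Lean document; each statement's English description precedes it below -/
import Mathlib

section
/- For all nonnegative integers k₀, k₁, k₂ with k₀+k₁+k₂ = k and every integer t ≥ k+1: τ_{λ₁}(R¹_{−1,t}) · x_{α₁}(−1)^{k₁} · x_{α₁+α₂}(−1)^{k₂} ∈ I_{k₂Λ₀+k₀Λ₁+k₁Λ₂}. -/
/- Setup: the nilpotent subalgebra 𝔫 ⊂ 𝔰𝔩(3,ℂ) spanned by E₁₂, E₂₃, E₁₃, its loop
algebra 𝔫̄ = 𝔫 ⊗ ℂ[t,t⁻¹], and the universal enveloping algebra U(𝔫̄). -/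

noncomputable section
open scoped TensorProduct

attribute [local instance 100] LieRing.ofAssociativeRing

namespace PrincipalSubspaceSL3

/-- 3×3 complex matrices. -/
abbrev gl3 : Type := Matrix (Fin 3) (Fin 3) ℂ

/-- The root vectors: `Egen 0 = x_{α₁} = E₁₂`, `Egen 1 = x_{α₂} = E₂₃`,
`Egen 2 = x_{α₁+α₂} = E₁₃`. -/
def Egen : Fin 3 → gl3
  | 0 => Matrix.single 0 1 1
  | 1 => Matrix.single 1 2 1
  | 2 => Matrix.single 0 2 1

lemma egen_lie_mem :
    ∀ x ∈ Submodule.span ℂ (Set.range Egen), ∀ y ∈ Submodule.span ℂ (Set.range Egen),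
      ⁅x, y⁆ ∈ Submodule.span ℂ (Set.range Egen) := by
  have key : ∀ a b : Fin 3, ⁅Egen a, Egen b⁆ ∈ Submodule.span ℂ (Set.range Egen) := by
    intro a b
    fin_cases a <;> fin_cases b <;>
      simp only [Egen, Ring.lie_def, Matrix.single_mul_single_same,
        Matrix.single_mul_single_of_ne, Fin.reduceEq, ne_eq, not_false_eq_true,
        one_mul, sub_zero, zero_sub, sub_self] <;>
      first
        | exact Submodule.zero_mem _
        | exact Submodule.subset_span ⟨2, rfl⟩
        | exact Submodule.neg_mem _ (Submodule.subset_span ⟨2, rfl⟩)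
  intro x hx
  induction hx using Submodule.span_induction with
  | mem x hxs =>
      obtain ⟨a, rfl⟩ := hxs
      intro y hy
      induction hy using Submodule.span_induction with
      | mem y hys => obtain ⟨b, rfl⟩ := hys; exact key a b
      | zero => simp
      | add y z hy hz hy' hz' => rw [lie_add]; exact Submodule.add_mem _ hy' hz'
      | smul c y hy hy' => rw [lie_smul]; exact Submodule.smul_mem _ _ hy'
  | zero => intro y hy; simp
  | add x z hx hz hx' hz' =>
      intro y hy; rw [add_lie]; exact Submodule.add_mem _ (hx' y hy) (hz' y hy)
  | smul c x hx hx' =>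
      intro y hy; rw [smul_lie]; exact Submodule.smul_mem _ _ (hx' y hy)

/-- The nilpotent Lie subalgebra 𝔫 = ℂE₁₂ ⊕ ℂE₂₃ ⊕ ℂE₁₃ of 𝔰𝔩(3,ℂ). -/
def nn : LieSubalgebra ℂ gl3 :=
  { Submodule.span ℂ (Set.range Egen) with
    lie_mem' := fun {x y} hx hy => egen_lie_mem x hx y hy }

/-- Laurent polynomials ℂ[t, t⁻¹]. -/
abbrev A : Type := LaurentPolynomial ℂ

/-- The loop algebra 𝔫̄ = 𝔫 ⊗ ℂ[t,t⁻¹]. -/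
abbrev nbar : Type := A ⊗[ℂ] nn

set_option synthInstance.maxHeartbeats 1000000 in
instance : LieAlgebra ℂ nbar where
  lie_smul c x y := by
    have h := lie_smul (algebraMap ℂ A c) x y
    rwa [algebraMap_smul, algebraMap_smul] at h

/-- The root vectors as elements of 𝔫. -/
def en (i : Fin 3) : nn := ⟨Egen i, Submodule.subset_span ⟨i, rfl⟩⟩

/-- `nx i m` is the element x_{α}(m) = x_α ⊗ tᵐ of 𝔫̄, where α is α₁, α₂, α₁+α₂
according to i = 0, 1, 2. -/
def nx (i : Fin 3) (m : ℤ) : nbar := LaurentPolynomial.T m ⊗ₜ[ℂ] en i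

/-- The universal enveloping algebra U(𝔫̄). -/
abbrev U : Type := UniversalEnvelopingAlgebra ℂ nbar

/-- `xg i m` is the element x_α(m) regarded inside U(𝔫̄). -/
def xg (i : Fin 3) (m : ℤ) : U := UniversalEnvelopingAlgebra.ι ℂ (nx i m)

/-- `Rtr k i t` = R^i_{-1,t} : the sum of x_{α_i}(m₁)⋯x_{α_i}(m_{k+1}) over all integer
tuples with every m_j ≤ -1 and m₁+⋯+m_{k+1} = -t (parametrized by m_j = -1 - n_j with
n : Fin (k+1) → ℕ, ∑ n = t - (k+1)).  Here i : Fin 2 refers to the simple root α_{i+1}. -/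
def Rtr (k : ℕ) (i : Fin 2) (t : ℤ) : U :=
  ∑ f ∈ Finset.Nat.antidiagonalTuple (k + 1) (t - (k + 1)).toNat,
    (List.ofFn fun j : Fin (k + 1) => xg i.castSucc (-1 - (f j : ℤ))).prod

/-- The left ideal J = Σ_{i,t≥k+1} U(𝔫̄)·R^i_{-1,t}. -/
def Jid (k : ℕ) : Submodule U U :=
  Submodule.span U {u : U | ∃ i : Fin 2, ∃ t : ℤ, (k : ℤ) + 1 ≤ t ∧ u = Rtr k i t}

/-- The left ideal U(𝔫̄)·𝔫̄₊, generated by the x_α(m) with m ≥ 0. -/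
def nplusIdeal : Submodule U U :=
  Submodule.span U {u : U | ∃ i : Fin 3, ∃ m : ℤ, 0 ≤ m ∧ u = xg i m}

/-- The left ideal I_{kΛ₀} = J + U(𝔫̄)·𝔫̄₊. -/
def IkL0 (k : ℕ) : Submodule U U := Jid k ⊔ nplusIdeal

/-- The left ideal I_{k₀Λ₀+k₁Λ₁+k₂Λ₂} = I_{kΛ₀} + U·x_{α₁}(-1)^{k₀+k₂+1}
+ U·x_{α₂}(-1)^{k₀+k₁+1} + U·x_{α₁+α₂}(-1)^{k₀+1} (with k = k₀+k₁+k₂). -/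
def Iwt (k k0 k1 k2 : ℕ) : Submodule U U :=
  IkL0 k ⊔ Submodule.span U {xg 0 (-1) ^ (k0 + k2 + 1)}
    ⊔ Submodule.span U {xg 1 (-1) ^ (k0 + k1 + 1)}
    ⊔ Submodule.span U {xg 2 (-1) ^ (k0 + 1)}


-- ===== auxiliary lemmas =====
set_option synthInstance.maxHeartbeats 1000000
set_option maxHeartbeats 1000000

lemma en_lie_10 : ⁅en 1, en 0⁆ = -en 2 := by
  apply Subtype.ext
  show ⁅(Egen 1 : gl3), Egen 0⁆ = -(Egen 2)
  simp only [Egen, Ring.lie_def, Matrix.single_mul_single_same,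
    Matrix.single_mul_single_of_ne, Fin.reduceEq, ne_eq, not_false_eq_true, one_mul]
  rw [zero_sub]

lemma en_lie_02 : ⁅en 0, en 2⁆ = 0 := by
  apply Subtype.ext
  show ⁅(Egen 0 : gl3), Egen 2⁆ = 0
  simp only [Egen, Ring.lie_def, Matrix.single_mul_single_of_ne, Fin.reduceEq, ne_eq,
    not_false_eq_true, sub_zero, sub_self]

lemma en_lie_12 : ⁅en 1, en 2⁆ = 0 := by
  apply Subtype.ext
  show ⁅(Egen 1 : gl3), Egen 2⁆ = 0
  simp only [Egen, Ring.lie_def, Matrix.single_mul_single_of_ne, Fin.reduceEq, ne_eq,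
    not_false_eq_true, sub_zero, sub_self]

lemma nx_lie (i j : Fin 3) (m p : ℤ) :
    ⁅nx i m, nx j p⁆ = LaurentPolynomial.T (m + p) ⊗ₜ[ℂ] (⁅en i, en j⁆ : nn) := by
  rw [nx, nx, LieAlgebra.ExtendScalars.bracket_tmul, LaurentPolynomial.T_add]

lemma xg_sub_lie (i j : Fin 3) (m p : ℤ) :
    xg i m * xg j p - xg j p * xg i m
      = UniversalEnvelopingAlgebra.ι ℂ (⁅nx i m, nx j p⁆ : nbar) := by
  rw [LieHom.map_lie, xg, xg, ← Ring.lie_def]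

lemma xg_commute00 (m p : ℤ) : Commute (xg 0 m) (xg 0 p) := by
  have h := xg_sub_lie 0 0 m p
  rw [nx_lie, lie_self, TensorProduct.tmul_zero, map_zero, sub_eq_zero] at h
  exact h

lemma xg_commute02 (m p : ℤ) : Commute (xg 0 m) (xg 2 p) := by
  have h := xg_sub_lie 0 2 m p
  rw [nx_lie, en_lie_02, TensorProduct.tmul_zero, map_zero, sub_eq_zero] at h
  exact h

lemma xg_commute12 (m p : ℤ) : Commute (xg 1 m) (xg 2 p) := by
  have h := xg_sub_lie 1 2 m p
  rw [nx_lie, en_lie_12, TensorProduct.tmul_zero, map_zero, sub_eq_zero] at h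
  exact h

lemma xg10_lie (m : ℤ) : xg 1 0 * xg 0 m - xg 0 m * xg 1 0 = -xg 2 m := by
  have h := xg_sub_lie 1 0 0 m
  rw [nx_lie, en_lie_10, TensorProduct.tmul_neg, map_neg, zero_add] at h
  exact h

lemma mem_Iwt_of_IkL0 {k k0 k1 k2 : ℕ} {u : U} (h : u ∈ IkL0 k) : u ∈ Iwt k k0 k1 k2 :=
  Submodule.mem_sup_left (Submodule.mem_sup_left (Submodule.mem_sup_left h))

lemma mem_Iwt_of_nplus_right {k k0 k1 k2 : ℕ} (u : U) :
    u * xg 1 0 ∈ Iwt k k0 k1 k2 := by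
  apply mem_Iwt_of_IkL0
  apply Submodule.mem_sup_right
  have hx : xg 1 0 ∈ {u : U | ∃ i : Fin 3, ∃ m : ℤ, 0 ≤ m ∧ u = xg i m} := ⟨1, 0, le_refl 0, rfl⟩
  have h2 := Submodule.smul_mem nplusIdeal u (Submodule.subset_span hx)
  rwa [smul_eq_mul] at h2

lemma Iwt_D_stable {k k0 k1 k2 : ℕ} {u : U} (h : u ∈ Iwt k k0 k1 k2) :
    xg 1 0 * u - u * xg 1 0 ∈ Iwt k k0 k1 k2 := by
  refine Submodule.sub_mem _ ?_ (mem_Iwt_of_nplus_right u)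
  have h2 := Submodule.smul_mem _ (xg 1 0) h
  rwa [smul_eq_mul] at h2

lemma comm_pow (b : ℕ) :
    xg 1 0 * xg 0 (-1) ^ (b + 1)
      = xg 0 (-1) ^ (b + 1) * xg 1 0 - (((b : ℂ) + 1)) • (xg 2 (-1) * xg 0 (-1) ^ b) := by
  have h1 : xg 1 0 * xg 0 (-1) = xg 0 (-1) * xg 1 0 - xg 2 (-1) := by
    have h := xg10_lie (-1)
    rw [sub_eq_iff_eq_add] at h
    rw [h]; abel
  induction b with
  | zero =>
      simp only [pow_one, pow_zero, mul_one, Nat.cast_zero, zero_add, one_smul]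
      exact h1
  | succ b ih =>
      have hzy : xg 0 (-1) ^ (b + 1) * xg 2 (-1) = xg 2 (-1) * xg 0 (-1) ^ (b + 1) :=
        ((xg_commute02 (-1) (-1)).pow_left (b + 1)).eq
      calc xg 1 0 * xg 0 (-1) ^ (b + 1 + 1)
          = (xg 1 0 * xg 0 (-1) ^ (b + 1)) * xg 0 (-1) := by rw [pow_succ, ← mul_assoc]
        _ = (xg 0 (-1) ^ (b + 1) * xg 1 0 - ((b : ℂ) + 1) • (xg 2 (-1) * xg 0 (-1) ^ b))
              * xg 0 (-1) := by rw [ih]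
        _ = xg 0 (-1) ^ (b + 1) * (xg 1 0 * xg 0 (-1))
              - ((b : ℂ) + 1) • (xg 2 (-1) * (xg 0 (-1) ^ b * xg 0 (-1))) := by
            rw [sub_mul, smul_mul_assoc, mul_assoc, mul_assoc]
        _ = xg 0 (-1) ^ (b + 1) * (xg 0 (-1) * xg 1 0 - xg 2 (-1))
              - ((b : ℂ) + 1) • (xg 2 (-1) * xg 0 (-1) ^ (b + 1)) := by
            rw [h1, ← pow_succ]
        _ = xg 0 (-1) ^ (b + 1 + 1) * xg 1 0 - xg 0 (-1) ^ (b + 1) * xg 2 (-1)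
              - ((b : ℂ) + 1) • (xg 2 (-1) * xg 0 (-1) ^ (b + 1)) := by
            rw [mul_sub, ← mul_assoc, ← pow_succ]
        _ = xg 0 (-1) ^ (b + 1 + 1) * xg 1 0
              - (1 : ℂ) • (xg 2 (-1) * xg 0 (-1) ^ (b + 1))
              - ((b : ℂ) + 1) • (xg 2 (-1) * xg 0 (-1) ^ (b + 1)) := by
            rw [hzy, one_smul]
        _ = xg 0 (-1) ^ (b + 1 + 1) * xg 1 0
              - (((b + 1 : ℕ) : ℂ) + 1) • (xg 2 (-1) * xg 0 (-1) ^ (b + 1)) := by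
            rw [sub_sub, ← add_smul]
            push_cast
            ring_nf

lemma w_mem (k K0 K1 K2 : ℕ) :
    ∀ a d : ℕ, a + d = K0 → xg 2 (-1) ^ a * xg 0 (-1) ^ (K2 + 1 + d) ∈ Iwt k K0 K1 K2 := by
  intro a
  induction a with
  | zero =>
      intro d hd
      rw [pow_zero, one_mul]
      have he : K2 + 1 + d = K0 + K2 + 1 := by omega
      rw [he]
      exact Submodule.mem_sup_left (Submodule.mem_sup_left
        (Submodule.mem_sup_right (Submodule.mem_span_singleton_self _)))
  | succ a ih =>
      intro d hd
      have hprev : xg 2 (-1) ^ a * xg 0 (-1) ^ ((K2 + 1 + d) + 1) ∈ Iwt k K0 K1 K2 := by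
        have h0 := ih (d + 1) (by omega)
        have he : K2 + 1 + (d + 1) = (K2 + 1 + d) + 1 := by omega
        rwa [he] at h0
      set b : ℕ := K2 + 1 + d with hb
      have hD := Iwt_D_stable hprev
      have hXz : xg 1 0 * xg 2 (-1) ^ a = xg 2 (-1) ^ a * xg 1 0 :=
        ((xg_commute12 0 (-1)).pow_right a).eq
      have hcomp : xg 1 0 * (xg 2 (-1) ^ a * xg 0 (-1) ^ (b + 1))
            - (xg 2 (-1) ^ a * xg 0 (-1) ^ (b + 1)) * xg 1 0
          = (-((b : ℂ) + 1)) • (xg 2 (-1) ^ (a + 1) * xg 0 (-1) ^ b) := by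
        rw [← mul_assoc, hXz, mul_assoc, mul_assoc, ← mul_sub, comm_pow b,
          sub_sub_cancel_left, mul_neg, mul_smul_comm, ← mul_assoc, ← pow_succ, neg_smul]
      rw [hcomp] at hD
      have hc : ((b : ℂ) + 1) ≠ 0 := by
        have h1 : ((b + 1 : ℕ) : ℂ) ≠ 0 := Nat.cast_ne_zero.mpr b.succ_ne_zero
        push_cast at h1
        exact h1
      have h6 := Submodule.smul_of_tower_mem _ (-((b : ℂ) + 1))⁻¹ hD
      rwa [smul_smul, inv_mul_cancel₀ (neg_ne_zero.mpr hc), one_smul] at h6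

lemma extract_y : ∀ L : List U, (∀ x ∈ L, ∃ m : ℤ, x = xg 0 m) → xg 0 (-1) ∈ L →
    ∃ Q : U, L.prod = Q * xg 0 (-1) := by
  intro L
  induction L with
  | nil => intro _ h; exact absurd h List.not_mem_nil
  | cons a tl ih =>
      intro hall hmem
      rcases List.mem_cons.mp hmem with h | h
      · refine ⟨tl.prod, ?_⟩
        rw [List.prod_cons, ← h]
        have hcomm : Commute (xg 0 (-1)) tl.prod := by
          apply Commute.list_prod_right
          intro x hx
          obtain ⟨m, rfl⟩ := hall x (List.mem_cons_of_mem _ hx)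
          exact xg_commute00 (-1) m
        exact hcomm.eq
      · obtain ⟨Q, hQ⟩ := ih (fun x hx => hall x (List.mem_cons_of_mem _ hx)) h
        exact ⟨a * Q, by rw [List.prod_cons, hQ, mul_assoc]⟩

lemma Rtr_commute (k : ℕ) (v : ℤ) (w : U) (h : ∀ m : ℤ, Commute (xg 0 m) w) :
    Commute (Rtr k 0 v) w := by
  rw [Rtr]
  apply Commute.sum_left
  intro f _
  apply Commute.list_prod_left
  intro x hx
  obtain ⟨j, rfl⟩ := List.mem_ofFn.mp hx
  exact h _

/-- for k₀+k₁+k₂ = k and t ≥ k+1,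
τ_{λ₁}(R¹_{−1,t})·x_{α₁}(−1)^{k₁}·x_{α₁+α₂}(−1)^{k₂} ∈ I_{k₂Λ₀+k₀Λ₁+k₁Λ₂},
where τ_{λ₁} is the automorphism of U(𝔫̄) with x_{α₁}(m) ↦ x_{α₁}(m−1),
x_{α₂}(m) ↦ x_{α₂}(m), x_{α₁+α₂}(m) ↦ x_{α₁+α₂}(m−1). -/
theorem statement10 (k : ℕ) (hk : 0 < k) (τ : U ≃ₐ[ℂ] U)
    (hτ1 : ∀ m : ℤ, τ (xg 0 m) = xg 0 (m - 1))
    (hτ2 : ∀ m : ℤ, τ (xg 1 m) = xg 1 m)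
    (hτ3 : ∀ m : ℤ, τ (xg 2 m) = xg 2 (m - 1))
    (k0 k1 k2 : ℕ) (hsum : k0 + k1 + k2 = k)
    (t : ℤ) (ht : (k : ℤ) + 1 ≤ t) :
    τ (Rtr k 0 t) * xg 0 (-1) ^ k1 * xg 2 (-1) ^ k2 ∈ Iwt k k2 k0 k1 := by
  classical
  set v : ℤ := t + (k + 1) with hv
  set s : ℕ := (t - (k + 1)).toNat with hs
  set P : (Fin (k + 1) → ℕ) → U :=
    fun g => (List.ofFn fun j : Fin (k + 1) => xg 0 (-1 - (g j : ℤ))).prod with hP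
  have hcast : ((0 : Fin 2).castSucc) = (0 : Fin 3) := rfl
  -- Step 1 : τ (Rtr k 0 t) as a sum
  have hτR : τ (Rtr k 0 t)
      = ∑ f ∈ Finset.Nat.antidiagonalTuple (k + 1) s, P (fun j => f j + 1) := by
    rw [Rtr, map_sum]
    refine Finset.sum_congr rfl fun f _ => ?_
    rw [map_list_prod, List.map_ofFn]
    rw [hP]
    refine congrArg List.prod (congrArg List.ofFn (funext fun j => ?_))
    simp only [Function.comp_apply]
    rw [hcast, hτ1]
    congr 1
    push_cast
    ring
  -- Step 2 : reindex
  have hbij : (∑ f ∈ Finset.Nat.antidiagonalTuple (k + 1) s, P (fun j => f j + 1))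
      = ∑ g ∈ (Finset.Nat.antidiagonalTuple (k + 1) (s + (k + 1))).filter
          (fun g => ∀ j, g j ≠ 0), P g := by
    refine Finset.sum_nbij' (i := fun f => fun j => f j + 1)
      (j := fun g => fun j => g j - 1) ?_ ?_ ?_ ?_ ?_
    · intro f hf
      rw [Finset.Nat.mem_antidiagonalTuple] at hf
      rw [Finset.mem_filter, Finset.Nat.mem_antidiagonalTuple]
      constructor
      · rw [Finset.sum_add_distrib, hf]
        simp
      · intro j
        exact Nat.succ_ne_zero _
    · intro g hg
      rw [Finset.mem_filter, Finset.Nat.mem_antidiagonalTuple] at hg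
      rw [Finset.Nat.mem_antidiagonalTuple]
      obtain ⟨hg1, hg2⟩ := hg
      have h1 : ∀ j, g j - 1 + 1 = g j := fun j =>
        Nat.succ_pred_eq_of_pos (Nat.pos_of_ne_zero (hg2 j))
      have h2 : (∑ j, (g j - 1 + 1)) = s + (k + 1) := by
        rw [Finset.sum_congr rfl (fun j _ => h1 j)]; exact hg1
      rw [Finset.sum_add_distrib] at h2
      simp only [Finset.sum_const, Finset.card_univ, Fintype.card_fin, smul_eq_mul,
        mul_one] at h2
      have h3 : (∑ j, (g j - 1)) = s := by omega
      simpa using h3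
    · intro f _
      funext j
      show f j + 1 - 1 = f j
      omega
    · intro g hg
      rw [Finset.mem_filter] at hg
      funext j
      have h9 := hg.2 j
      show g j - 1 + 1 = g j
      omega
    · intro f _
      rfl
  -- Step 3 : Rtr k 0 v as a sum
  have hRv : Rtr k 0 v
      = ∑ g ∈ Finset.Nat.antidiagonalTuple (k + 1) (s + (k + 1)), P g := by
    rw [Rtr]
    have he : (v - (k + 1)).toNat = s + (k + 1) := by omega
    rw [he]
    rfl
  -- Step 4 : split and combine
  have hsplit := Finset.sum_filter_add_sum_filter_not
      (Finset.Nat.antidiagonalTuple (k + 1) (s + (k + 1)))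
      (fun g => ∀ j, g j ≠ 0) P
  have hkey : τ (Rtr k 0 t)
      = Rtr k 0 v - ∑ g ∈ (Finset.Nat.antidiagonalTuple (k + 1) (s + (k + 1))).filter
          (fun g => ¬ ∀ j, g j ≠ 0), P g := by
    rw [hτR, hbij, eq_sub_iff_add_eq, hRv, hsplit]
  rw [hkey, sub_mul, sub_mul]
  refine Submodule.sub_mem _ ?_ ?_
  · -- main term
    have hRy : Commute (Rtr k 0 v) (xg 0 (-1) ^ k1) :=
      (Rtr_commute k v _ (fun m => xg_commute00 m (-1))).pow_right k1
    have hRz : Commute (Rtr k 0 v) (xg 2 (-1) ^ k2) :=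
      (Rtr_commute k v _ (fun m => xg_commute02 m (-1))).pow_right k2
    have hrw : Rtr k 0 v * xg 0 (-1) ^ k1 * xg 2 (-1) ^ k2
        = (xg 0 (-1) ^ k1 * xg 2 (-1) ^ k2) * Rtr k 0 v := by
      rw [hRy.eq, mul_assoc, hRz.eq, ← mul_assoc]
    rw [hrw]
    have hgen : Rtr k 0 v ∈ Jid k :=
      Submodule.subset_span ⟨0, v, by omega, rfl⟩
    have h2 := Submodule.smul_mem (Jid k) (xg 0 (-1) ^ k1 * xg 2 (-1) ^ k2) hgen
    rw [smul_eq_mul] at h2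
    exact mem_Iwt_of_IkL0 (Submodule.mem_sup_left h2)
  · -- bad terms
    rw [Finset.sum_mul, Finset.sum_mul]
    refine Submodule.sum_mem _ fun g hg => ?_
    rw [Finset.mem_filter] at hg
    obtain ⟨_, hg2⟩ := hg
    push_neg at hg2
    obtain ⟨j₀, hj₀⟩ := hg2
    have hmem : xg 0 (-1) ∈ (List.ofFn fun j : Fin (k + 1) => xg 0 (-1 - (g j : ℤ))) := by
      rw [List.mem_ofFn]
      refine ⟨j₀, ?_⟩
      show xg 0 (-1 - (g j₀ : ℤ)) = xg 0 (-1)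
      rw [hj₀]
      norm_num
    obtain ⟨Q, hQ⟩ := extract_y _ (fun x hx => by
      obtain ⟨j, rfl⟩ := List.mem_ofFn.mp hx
      exact ⟨_, rfl⟩) hmem
    have hPg : P g = Q * xg 0 (-1) := hQ
    rw [hPg, mul_assoc, mul_assoc]
    have hyz : xg 0 (-1) * (xg 0 (-1) ^ k1 * xg 2 (-1) ^ k2)
        = xg 2 (-1) ^ k2 * xg 0 (-1) ^ (k1 + 1) := by
      rw [← mul_assoc, ← pow_succ', ((xg_commute02 (-1) (-1)).pow_pow (k1 + 1) k2).eq]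
    rw [hyz]
    have hw := w_mem k k2 k0 k1 k2 0 (by omega)
    rw [Nat.add_zero] at hw
    have h3 := Submodule.smul_mem (Iwt k k2 k0 k1) Q hw
    rwa [smul_eq_mul] at h3


end PrincipalSubspaceSL3
end
end

section
/- For all nonnegative integers k₀, k₁, k₂ with k₀+k₁+k₂ = k and every integer t ≥ k+1: R²_{−1,t} · x_{α₁}(−1)^{k₁} · x_{α₁+α₂}(−1)^{k₂} ∈ I_{k₂Λ₀+k₀Λ₁+k₁Λ₂}. -/
/- Setup: the nilpotent subalgebra 𝔫 ⊂ 𝔰𝔩(3,ℂ) spanned by E₁₂, E₂₃, E₁₃, its loop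
algebra 𝔫̄ = 𝔫 ⊗ ℂ[t,t⁻¹], and the universal enveloping algebra U(𝔫̄). -/

noncomputable section
open scoped TensorProduct
attribute [local instance 100] LieRing.ofAssociativeRing

namespace PrincipalSubspaceSL3

lemma en_lie_01 : ⁅en 0, en 1⁆ = en 2 := by
  apply Subtype.ext
  show ⁅Egen 0, Egen 1⁆ = Egen 2
  simp only [Egen, Ring.lie_def]
  ext i j
  simp [Matrix.single_mul_single_same, Matrix.single_mul_single_of_ne]

lemma en_lie_2 (i : Fin 3) : ⁅en 2, en i⁆ = 0 := by
  apply Subtype.ext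
  show ⁅Egen 2, Egen i⁆ = 0
  fin_cases i <;>
  · simp only [Egen, Ring.lie_def]
    ext a b
    simp [Matrix.mul_apply, Matrix.single, Fin.sum_univ_succ]
    try aesop

lemma en_lie_00 : ⁅en 0, en 0⁆ = 0 := lie_self _

lemma nx_lie_01 (p m : ℤ) : ⁅nx 0 p, nx 1 m⁆ = nx 2 (p + m) := by
  show ⁅LaurentPolynomial.T p ⊗ₜ[ℂ] en 0, LaurentPolynomial.T m ⊗ₜ[ℂ] en 1⁆ = _
  rw [LieAlgebra.ExtendScalars.bracket_tmul]
  rw [en_lie_01, ← LaurentPolynomial.T_add]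
  rfl

set_option synthInstance.maxHeartbeats 1000000

lemma nx_lie_2 (a : ℤ) (i : Fin 3) (m : ℤ) : ⁅nx 2 a, nx i m⁆ = 0 := by
  show ⁅LaurentPolynomial.T a ⊗ₜ[ℂ] en 2, LaurentPolynomial.T m ⊗ₜ[ℂ] en i⁆ = _
  rw [LieAlgebra.ExtendScalars.bracket_tmul, en_lie_2, TensorProduct.tmul_zero]

lemma nx_lie_00 (p q : ℤ) : ⁅nx 0 p, nx 0 q⁆ = 0 := by
  show ⁅LaurentPolynomial.T p ⊗ₜ[ℂ] en 0, LaurentPolynomial.T q ⊗ₜ[ℂ] en 0⁆ = _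
  rw [LieAlgebra.ExtendScalars.bracket_tmul, lie_self, TensorProduct.tmul_zero]

lemma xg01 (p m : ℤ) : xg 0 p * xg 1 m = xg 1 m * xg 0 p + xg 2 (p + m) := by
  have h := (UniversalEnvelopingAlgebra.ι ℂ : nbar →ₗ⁅ℂ⁆ U).map_lie (nx 0 p) (nx 1 m)
  rw [nx_lie_01, Ring.lie_def] at h
  unfold xg; rw [h]; abel

lemma xg2_commute (a : ℤ) (i : Fin 3) (m : ℤ) : Commute (xg 2 a) (xg i m) := by
  have h := (UniversalEnvelopingAlgebra.ι ℂ : nbar →ₗ⁅ℂ⁆ U).map_lie (nx 2 a) (nx i m)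
  rw [nx_lie_2, Ring.lie_def, map_zero] at h
  exact (sub_eq_zero.mp h.symm)

lemma xg00_commute (p q : ℤ) : Commute (xg 0 p) (xg 0 q) := by
  have h := (UniversalEnvelopingAlgebra.ι ℂ : nbar →ₗ⁅ℂ⁆ U).map_lie (nx 0 p) (nx 0 q)
  rw [nx_lie_00, Ring.lie_def, map_zero] at h
  exact (sub_eq_zero.mp h.symm)

/-- Product of `xg 1` factors with modes given by `g`. -/
def Lp {n : ℕ} (g : Fin n → ℤ) : U := (List.ofFn fun j => xg 1 (g j)).prod

lemma xg2_commute_Lp (a : ℤ) {n : ℕ} (g : Fin n → ℤ) : Commute (xg 2 a) (Lp g) := by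
  apply Commute.list_prod_right
  intro y hy
  rw [List.mem_ofFn] at hy
  obtain ⟨j, rfl⟩ := hy
  exact xg2_commute a 1 (g j)

lemma Lp_succ {n : ℕ} (g : Fin (n+1) → ℤ) : Lp g = xg 1 (g 0) * Lp (g ∘ Fin.succ) := by
  unfold Lp
  rw [List.ofFn_succ, List.prod_cons]
  rfl

lemma key (p : ℤ) : ∀ (n : ℕ) (g : Fin (n+1) → ℤ),
    xg 0 p * Lp g = Lp g * xg 0 p
      + ∑ j : Fin (n+1), xg 2 (p + g j) * Lp (g ∘ j.succAbove) := by
  intro n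
  induction n with
  | zero =>
    intro g
    have h1 : Lp (g ∘ Fin.succ) = 1 := rfl
    have h2 : ∀ j : Fin 1, Lp (g ∘ j.succAbove) = 1 := fun _ => rfl
    simp only [h2, mul_one, Fin.sum_univ_one]
    rw [Lp_succ g, h1, mul_one, Fin.sum_univ_one, xg01]
  | succ n ih =>
    intro g
    have h0 : (g ∘ (0 : Fin (n+2)).succAbove) = g ∘ Fin.succ := by
      funext i; simp [Fin.succAbove_zero]
    have hsucc : ∀ j : Fin (n+1),
        Lp (g ∘ (j.succ).succAbove) = xg 1 (g 0) * Lp ((g ∘ Fin.succ) ∘ j.succAbove) := by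
      intro j
      rw [Lp_succ (g ∘ (j.succ).succAbove)]
      congr 1
      · show Lp ((g ∘ j.succ.succAbove) ∘ Fin.succ) = _
        congr 1
        funext i
        show g (j.succ.succAbove i.succ) = g ((j.succAbove i).succ)
        rw [Fin.succ_succAbove_succ]
    calc xg 0 p * Lp g
        = xg 1 (g 0) * (xg 0 p * Lp (g ∘ Fin.succ)) + xg 2 (p + g 0) * Lp (g ∘ Fin.succ) := by
          rw [Lp_succ g, ← mul_assoc, xg01, add_mul, mul_assoc]
      _ = xg 1 (g 0) * (Lp (g ∘ Fin.succ) * xg 0 p)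
          + (xg 2 (p + g 0) * Lp (g ∘ Fin.succ)
            + ∑ j : Fin (n+1), xg 1 (g 0) * (xg 2 (p + (g ∘ Fin.succ) j)
                * Lp ((g ∘ Fin.succ) ∘ j.succAbove))) := by
          rw [ih (g ∘ Fin.succ), mul_add, Finset.mul_sum]
          abel
      _ = Lp g * xg 0 p + ∑ j : Fin (n+2), xg 2 (p + g j) * Lp (g ∘ j.succAbove) := by
          conv_rhs => rw [Fin.sum_univ_succ]
          rw [h0, Lp_succ g, mul_assoc]
          congr 1
          congr 1
          apply Finset.sum_congr rfl
          intro j _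
          simp only [Function.comp_apply]
          rw [hsucc j, ← mul_assoc, ← mul_assoc]
          congr 1
          exact ((xg2_commute (p + g j.succ) 1 (g 0)).eq).symm

/-- `Rn n u` is the sum of products of `n` factors `xg 1 (m_i)`, `m_i ≤ -1`, `∑ m_i = -u`. -/
def Rn (n : ℕ) (u : ℤ) : U :=
  ∑ f ∈ Finset.Nat.antidiagonalTuple n (u - n).toNat, Lp (fun j => -1 - (f j : ℤ))

lemma Rtr_eq (k : ℕ) (t : ℤ) : Rtr k 1 t = Rn (k+1) t := by
  unfold Rtr Rn Lp
  have h : ((1 : Fin 2).castSucc) = (1 : Fin 3) := rfl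
  have h2 : ((k : ℤ) + 1) = ((k + 1 : ℕ) : ℤ) := by push_cast; ring
  rw [h, h2]

lemma xg2_commute_Rn (a : ℤ) (n : ℕ) (u : ℤ) : Commute (xg 2 a) (Rn n u) :=
  Commute.sum_right _ _ _ (fun f _ => xg2_commute_Lp a _)

lemma comm_Rsum (p : ℤ) (n : ℕ) (M : ℕ) :
    xg 0 p * (∑ f ∈ Finset.Nat.antidiagonalTuple (n+1) M, Lp (fun j => -1 - (f j : ℤ)))
      - (∑ f ∈ Finset.Nat.antidiagonalTuple (n+1) M, Lp (fun j => -1 - (f j : ℤ))) * xg 0 p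
    = ∑ j : Fin (n+1), ∑ f ∈ Finset.Nat.antidiagonalTuple (n+1) M,
        xg 2 (p + (-1 - (f j : ℤ))) * Lp ((fun i => -1 - (f i : ℤ)) ∘ j.succAbove) := by
  rw [Finset.mul_sum, Finset.sum_mul, ← Finset.sum_sub_distrib, Finset.sum_comm]
  apply Finset.sum_congr rfl
  intro f _
  rw [key p n (fun j => -1 - (f j : ℤ)), add_sub_cancel_left]

lemma star (n : ℕ) (t : ℤ) (ht : (n : ℤ) + 1 ≤ t) :
    xg 0 0 * Rn (n+1) (t+1) - Rn (n+1) (t+1) * xg 0 0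
      = (xg 0 (-1) * Rn (n+1) t - Rn (n+1) t * xg 0 (-1))
        + (n+1) • (xg 2 (-1) * Rn n t) := by
  classical
  set N : ℕ := (t - ((n+1 : ℕ) : ℤ)).toNat with hN
  have e1 : ((t+1) - ((n+1 : ℕ) : ℤ)).toNat = N + 1 := by push_cast at hN ⊢; omega
  have e3 : (t - ((n : ℕ) : ℤ)).toNat = N + 1 := by push_cast at hN ⊢; omega
  rw [show Rn (n+1) (t+1)
        = ∑ f ∈ Finset.Nat.antidiagonalTuple (n+1) (N+1), Lp (fun j => -1 - (f j : ℤ)) by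
      unfold Rn; rw [e1],
    show Rn (n+1) t
        = ∑ f ∈ Finset.Nat.antidiagonalTuple (n+1) N, Lp (fun j => -1 - (f j : ℤ)) by
      unfold Rn; rw [← hN],
    show Rn n t = ∑ g ∈ Finset.Nat.antidiagonalTuple n (N+1), Lp (fun j => -1 - (g j : ℤ)) by
      unfold Rn; rw [e3]]
  rw [comm_Rsum 0 n (N+1), comm_Rsum (-1) n N]
  rw [show ((n+1) • (xg 2 (-1) * ∑ g ∈ Finset.Nat.antidiagonalTuple n (N+1),
          Lp (fun j => -1 - (g j : ℤ)))
        = ∑ j : Fin (n+1), xg 2 (-1) * ∑ g ∈ Finset.Nat.antidiagonalTuple n (N+1),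
          Lp (fun j => -1 - (g j : ℤ))) by
    rw [Finset.sum_const, Finset.card_univ, Fintype.card_fin]]
  rw [← Finset.sum_add_distrib]
  apply Finset.sum_congr rfl
  intro j _
  rw [← Finset.sum_filter_add_sum_filter_not (Finset.Nat.antidiagonalTuple (n+1) (N+1))
      (fun f => f j = 0)]
  have hA : (∑ f ∈ (Finset.Nat.antidiagonalTuple (n+1) (N+1)).filter (fun f => f j = 0),
        xg 2 (0 + (-1 - (f j : ℤ))) * Lp ((fun i => -1 - (f i : ℤ)) ∘ j.succAbove))
      = xg 2 (-1) * ∑ g ∈ Finset.Nat.antidiagonalTuple n (N+1), Lp (fun i => -1 - (g i : ℤ)) := by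
    rw [Finset.mul_sum]
    refine Finset.sum_bij' (fun f _ => j.removeNth f) (fun g _ => j.insertNth 0 g)
      ?_ ?_ ?_ ?_ ?_
    · intro f hf
      rw [Finset.mem_filter, Finset.Nat.mem_antidiagonalTuple] at hf
      rw [Finset.Nat.mem_antidiagonalTuple]
      beta_reduce
      have hs := Fin.sum_univ_succAbove f j
      simp only [Fin.removeNth]
      have h1 := hf.1
      have h2 := hf.2
      omega
    · intro g hg
      rw [Finset.Nat.mem_antidiagonalTuple] at hg
      rw [Finset.mem_filter, Finset.Nat.mem_antidiagonalTuple]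
      beta_reduce
      rw [Fin.sum_univ_succAbove _ j]
      simp [Fin.insertNth_apply_same, Fin.insertNth_apply_succAbove, hg]
    · intro f hf
      rw [Finset.mem_filter] at hf
      beta_reduce
      rw [Fin.insertNth_removeNth, ← hf.2]
      exact Function.update_eq_self j f
    · intro g hg
      beta_reduce
      funext i
      simp [Fin.removeNth, Fin.insertNth_apply_succAbove]
    · intro f hf
      rw [Finset.mem_filter] at hf
      beta_reduce
      rw [hf.2]
      norm_num
      rfl
  have hB : (∑ f ∈ (Finset.Nat.antidiagonalTuple (n+1) (N+1)).filter (fun f => ¬ f j = 0),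
        xg 2 (0 + (-1 - (f j : ℤ))) * Lp ((fun i => -1 - (f i : ℤ)) ∘ j.succAbove))
      = ∑ f ∈ Finset.Nat.antidiagonalTuple (n+1) N,
        xg 2 (-1 + (-1 - (f j : ℤ))) * Lp ((fun i => -1 - (f i : ℤ)) ∘ j.succAbove) := by
    refine Finset.sum_bij' (fun f _ => Function.update f j (f j - 1))
      (fun g _ => Function.update g j (g j + 1)) ?_ ?_ ?_ ?_ ?_
    · intro f hf
      rw [Finset.mem_filter, Finset.Nat.mem_antidiagonalTuple] at hf
      rw [Finset.Nat.mem_antidiagonalTuple]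
      beta_reduce
      rw [Fin.sum_univ_succAbove _ j, Function.update_self,
        Finset.sum_congr rfl (fun i _ => Function.update_of_ne (Fin.succAbove_ne j i) _ f)]
      have h1 := hf.1
      have h2 := hf.2
      rw [Fin.sum_univ_succAbove f j] at h1
      omega
    · intro g hg
      rw [Finset.Nat.mem_antidiagonalTuple] at hg
      rw [Finset.mem_filter, Finset.Nat.mem_antidiagonalTuple]
      beta_reduce
      constructor
      · rw [Fin.sum_univ_succAbove _ j, Function.update_self,
          Finset.sum_congr rfl (fun i _ => Function.update_of_ne (Fin.succAbove_ne j i) _ g)]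
        rw [Fin.sum_univ_succAbove g j] at hg
        omega
      · rw [Function.update_self]
        omega
    · intro f hf
      rw [Finset.mem_filter] at hf
      have h1 : f j ≠ 0 := hf.2
      beta_reduce
      rw [Function.update_self, Function.update_idem, show f j - 1 + 1 = f j by omega]
      exact Function.update_eq_self j f
    · intro g hg
      beta_reduce
      rw [Function.update_self, Function.update_idem, show g j + 1 - 1 = g j by omega]
      exact Function.update_eq_self j g
    · intro f hf
      rw [Finset.mem_filter] at hf
      have h1 : f j ≠ 0 := hf.2
      beta_reduce
      congr 1
      · rw [Function.update_self]
        have hc : ((f j - 1 : ℕ) : ℤ) = (f j : ℤ) - 1 := by omega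
        rw [hc]
        congr 1
        omega
      · congr 1
        funext i
        simp only [Function.comp_apply]
        rw [Function.update_of_ne (Fin.succAbove_ne j i) _ f]
  rw [hA, hB, add_comm]

lemma IkL0_le_Iwt (k c b d : ℕ) : IkL0 k ≤ Iwt k c b d :=
  le_trans (le_trans le_sup_left le_sup_left) le_sup_left

lemma J_mem_Iwt (k c b d : ℕ) {x : U} (hx : x ∈ Jid k) : x ∈ Iwt k c b d :=
  IkL0_le_Iwt k c b d (Submodule.mem_sup_left hx)

lemma nplus_mem_Iwt (k c b d : ℕ) {x : U} (hx : x ∈ nplusIdeal) : x ∈ Iwt k c b d :=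
  IkL0_le_Iwt k c b d (Submodule.mem_sup_right hx)

lemma mul_Rtr_mem_J (k : ℕ) (u : U) (t : ℤ) (ht : (k : ℤ) + 1 ≤ t) :
    u * Rtr k 1 t ∈ Jid k := by
  have hgen : Rtr k 1 t ∈ {x : U | ∃ i : Fin 2, ∃ s : ℤ, (k : ℤ) + 1 ≤ s ∧ x = Rtr k i s} :=
    ⟨1, t, ht, rfl⟩
  have := Submodule.smul_mem (Jid k) u (Submodule.subset_span hgen)
  rwa [smul_eq_mul] at this

lemma mul_xg00_mem_nplus (u : U) : u * xg 0 0 ∈ nplusIdeal := by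
  have hgen : xg 0 0 ∈ {x : U | ∃ i : Fin 3, ∃ m : ℤ, 0 ≤ m ∧ x = xg i m} :=
    ⟨0, 0, le_refl 0, rfl⟩
  have := Submodule.smul_mem nplusIdeal u (Submodule.subset_span hgen)
  rwa [smul_eq_mul] at this

lemma mul_xg2pow_mem_Iwt (k c b d : ℕ) (u : U) :
    u * xg 2 (-1) ^ (c + 1) ∈ Iwt k c b d := by
  have h : u * xg 2 (-1) ^ (c + 1) ∈ Submodule.span U {xg 2 (-1) ^ (c + 1)} := by
    have := Submodule.smul_mem (Submodule.span U {xg 2 (-1) ^ (c + 1)}) u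
      (Submodule.subset_span rfl)
    rwa [smul_eq_mul] at this
  exact Submodule.mem_sup_right h

lemma xg2_commute_mix (a : ℤ) (c n m : ℕ) (u q : ℤ) :
    Commute (xg 2 a ^ c) (Rn n u * xg 0 q ^ m) :=
  ((xg2_commute_Rn a n u).mul_right ((xg2_commute a 0 q).pow_right m)).pow_left c

set_option maxHeartbeats 2000000 in
lemma main (k c b d : ℕ) : ∀ (m : ℕ), ∀ (t : ℤ), (k : ℤ) + 1 ≤ t →
    xg 2 (-1) ^ c * (Rn (k+1) t * xg 0 (-1) ^ m) ∈ Iwt k c b d := by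
  intro m
  induction m with
  | zero =>
    intro t ht
    rw [pow_zero, mul_one, ← Rtr_eq]
    exact J_mem_Iwt k c b d (mul_Rtr_mem_J k _ t ht)
  | succ m ih =>
    intro t ht
    have hstar := star k t ht
    have he : ((k+1) • (xg 2 (-1) * Rn k t))
        = (xg 0 0 * Rn (k+1) (t+1) - Rn (k+1) (t+1) * xg 0 0)
          - (xg 0 (-1) * Rn (k+1) t - Rn (k+1) t * xg 0 (-1)) := by
      rw [hstar]; abel
    have hkey : Rn (k+1) t * xg 0 (-1)
        = xg 0 (-1) * Rn (k+1) t + ((k+1) • (xg 2 (-1) * Rn k t)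
          + (Rn (k+1) (t+1) * xg 0 0 - xg 0 0 * Rn (k+1) (t+1))) := by
      rw [he]; abel
    have comm_c0 : ∀ (q : ℤ) (Y : U),
        xg 2 (-1) ^ c * (xg 0 q * Y) = xg 0 q * (xg 2 (-1) ^ c * Y) := by
      intro q Y
      rw [← mul_assoc, ((xg2_commute (-1) 0 q).pow_left c).eq, mul_assoc]
    have hA' : xg 2 (-1) ^ c * ((xg 0 (-1) * Rn (k+1) t) * xg 0 (-1) ^ m) ∈ Iwt k c b d := by
      rw [mul_assoc (xg 0 (-1)), comm_c0]
      have := Submodule.smul_mem (Iwt k c b d) (xg 0 (-1)) (ih t ht)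
      rwa [smul_eq_mul] at this
    have hB' : xg 2 (-1) ^ c * (((k+1) • (xg 2 (-1) * Rn k t)) * xg 0 (-1) ^ m)
        ∈ Iwt k c b d := by
      have e : xg 2 (-1) ^ c * (((k+1) • (xg 2 (-1) * Rn k t)) * xg 0 (-1) ^ m)
          = (k+1) • ((Rn k t * xg 0 (-1) ^ m) * xg 2 (-1) ^ (c+1)) := by
        rw [smul_mul_assoc, mul_smul_comm]
        congr 1
        rw [mul_assoc (xg 2 (-1)), ← mul_assoc (xg 2 (-1) ^ c), ← pow_succ]
        exact (xg2_commute_mix (-1) (c+1) k m t (-1)).eq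
      rw [e]
      exact nsmul_mem (mul_xg2pow_mem_Iwt k c b d _) (k+1)
    have hC' : xg 2 (-1) ^ c * ((Rn (k+1) (t+1) * xg 0 0) * xg 0 (-1) ^ m)
        ∈ Iwt k c b d := by
      have e : xg 2 (-1) ^ c * ((Rn (k+1) (t+1) * xg 0 0) * xg 0 (-1) ^ m)
          = (xg 2 (-1) ^ c * (Rn (k+1) (t+1) * xg 0 (-1) ^ m)) * xg 0 0 := by
        rw [mul_assoc (Rn (k+1) (t+1)) (xg 0 0), ((xg00_commute 0 (-1)).pow_right m).eq,
          ← mul_assoc (Rn (k+1) (t+1)), ← mul_assoc]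
      rw [e]
      exact nplus_mem_Iwt k c b d (mul_xg00_mem_nplus _)
    have hD' : xg 2 (-1) ^ c * ((xg 0 0 * Rn (k+1) (t+1)) * xg 0 (-1) ^ m)
        ∈ Iwt k c b d := by
      rw [mul_assoc (xg 0 0), comm_c0]
      have ht' : (k : ℤ) + 1 ≤ t + 1 := by omega
      have := Submodule.smul_mem (Iwt k c b d) (xg 0 0) (ih (t+1) ht')
      rwa [smul_eq_mul] at this
    have h1 : Rn (k+1) t * xg 0 (-1) ^ (m+1) = (Rn (k+1) t * xg 0 (-1)) * xg 0 (-1) ^ m := by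
      rw [pow_succ', ← mul_assoc]
    have hX : xg 2 (-1) ^ c * (Rn (k+1) t * xg 0 (-1) ^ (m+1))
        = xg 2 (-1) ^ c * ((xg 0 (-1) * Rn (k+1) t) * xg 0 (-1) ^ m)
          + (xg 2 (-1) ^ c * (((k+1) • (xg 2 (-1) * Rn k t)) * xg 0 (-1) ^ m)
            + (xg 2 (-1) ^ c * ((Rn (k+1) (t+1) * xg 0 0) * xg 0 (-1) ^ m)
              - xg 2 (-1) ^ c * ((xg 0 0 * Rn (k+1) (t+1)) * xg 0 (-1) ^ m))) := by
      rw [h1, hkey]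
      simp only [add_mul, sub_mul, mul_add, mul_sub]
    rw [hX]
    exact add_mem hA' (add_mem hB' (sub_mem hC' hD'))

/-- for k₀+k₁+k₂ = k and t ≥ k+1,
R²_{−1,t}·x_{α₁}(−1)^{k₁}·x_{α₁+α₂}(−1)^{k₂} ∈ I_{k₂Λ₀+k₀Λ₁+k₁Λ₂}. -/
theorem statement11 (k : ℕ) (hk : 0 < k) (k0 k1 k2 : ℕ) (hsum : k0 + k1 + k2 = k)
    (t : ℤ) (ht : (k : ℤ) + 1 ≤ t) :
    Rtr k 1 t * xg 0 (-1) ^ k1 * xg 2 (-1) ^ k2 ∈ Iwt k k2 k0 k1 := by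
  rw [Rtr_eq]
  rw [show Rn (k+1) t * xg 0 (-1) ^ k1 * xg 2 (-1) ^ k2
      = xg 2 (-1) ^ k2 * (Rn (k+1) t * xg 0 (-1) ^ k1) from
    ((xg2_commute_mix (-1) k2 (k+1) k1 t (-1)).eq).symm]
  exact main k k2 k0 k1 k1 t ht

end PrincipalSubspaceSL3
end
end
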